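/- For all nonnegative integers n and j, the Legendre-Stirling number of the second kind satisfies {n brace j}_1 = (1/(2j)!) Σ_{ν=0}^{2j} (-1)^ν C(2j,ν) ((j-ν)(j+1-ν))^n. -/

import Mathlib

noncomputable def LS : ℕ → ℕ → ℝ
  | 0, 0 => 1
  | 0, _ + 1 => 0
  | _ + 1, 0 => 0
  | n + 1, j + 1 => LS n j + ((j:ℝ) + 1) * ((j:ℝ) + 2) * LS n (j + 1)

lemma coeff_id (j μ : ℕ) (h : μ ≤ 2*j+1) :
    (μ+1) * ((2*j+2-μ) * Nat.choose (2*j+2) (μ+1))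
      = (2*j+1)*(2*j+2) * Nat.choose (2*j) μ + (2*j+2) * Nat.choose (2*j+1) μ := by
  have h1 : (2*j+2) * Nat.choose (2*j+1) μ = Nat.choose (2*j+2) (μ+1) * (μ+1) :=
    Nat.add_one_mul_choose_eq (2*j+1) μ
  have h2 : Nat.choose (2*j) μ * (2*j+1) = Nat.choose (2*j+1) μ * (2*j+1-μ) :=
    Nat.choose_mul_succ_eq (2*j) μ
  zify [h, (by omega : μ ≤ 2*j+2)] at h1 h2 ⊢
  linear_combination ((μ:ℤ) - 2*j - 2) * h1 - (2*(j:ℤ)+2) * h2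

lemma key_zero (n j : ℕ) :
    ∑ μ ∈ Finset.range (2*j+2), (-1:ℝ)^μ * (Nat.choose (2*j+1) μ) *
      (((j:ℝ) - μ) * ((j:ℝ) + 1 - μ))^n = 0 := by
  set f : ℕ → ℝ := fun μ => (-1:ℝ)^μ * (Nat.choose (2*j+1) μ) *
      (((j:ℝ) - μ) * ((j:ℝ) + 1 - μ))^n with hf
  have hrefl := Finset.sum_range_reflect f (2*j+2)
  have hneg : ∀ μ ∈ Finset.range (2*j+2), f (2*j+2-1-μ) = - f μ := by
    intro μ hμ
    have hμ' : μ ≤ 2*j+1 := by simpa using Nat.lt_succ_iff.mp (Finset.mem_range.mp hμ)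
    have hidx : 2*j+2-1-μ = 2*j+1-μ := by omega
    have hsym : Nat.choose (2*j+1) (2*j+1-μ) = Nat.choose (2*j+1) μ :=
      Nat.choose_symm hμ'
    have hcast : ((2*j+1-μ : ℕ) : ℝ) = 2*(j:ℝ)+1-μ := by
      push_cast [Nat.cast_sub hμ']; ring
    have hbase : (((j:ℝ) - ((2*j+1-μ : ℕ):ℝ)) * ((j:ℝ) + 1 - ((2*j+1-μ : ℕ):ℝ)))
        = (((j:ℝ) - μ) * ((j:ℝ) + 1 - μ)) := by
      rw [hcast]; ring
    have hsign : (-1:ℝ)^(2*j+1-μ) = -(-1:ℝ)^μ := by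
      have e1 : (-1:ℝ)^(2*j+1-μ) = (-1:ℝ)^(2*j+1+μ) := by
        conv_rhs => rw [show 2*j+1+μ = (2*j+1-μ) + 2*μ by omega]
        rw [pow_add, pow_mul]; norm_num
      rw [e1, show 2*j+1+μ = μ + (2*j+1) by omega, pow_add, pow_succ, pow_mul]
      norm_num
    simp only [hf, hidx, hsym, hbase, hsign]
    ring
  rw [Finset.sum_congr rfl hneg, Finset.sum_neg_distrib] at hrefl
  linarith

theorem ls_single_sum (n j : ℕ) :
    LS n j = (1 / (Nat.factorial (2 * j) : ℝ)) *
      ∑ ν ∈ Finset.range (2 * j + 1),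
        (-1 : ℝ) ^ ν * (Nat.choose (2 * j) ν) *
          (((j : ℝ) - ν) * ((j : ℝ) + 1 - ν)) ^ n := by
  induction n generalizing j with
  | zero =>
    have halt : ((∑ i ∈ Finset.range (2*j+1), (-1:ℤ)^i * (Nat.choose (2*j) i) : ℤ) : ℝ)
        = if 2*j = 0 then 1 else 0 := by
      rw [Int.alternating_sum_range_choose]
      split <;> norm_num
    push_cast at halt
    cases j with
    | zero =>
      simp only [LS, Nat.mul_zero, pow_zero, mul_one]
      norm_num
    | succ j =>
      simp only [LS, pow_zero, mul_one]
      rw [show (0:ℝ) = (1 / (Nat.factorial (2*(j+1)) : ℝ)) * 0 by ring]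
      congr 1
      simpa using halt.symm
  | succ n ih =>
    cases j with
    | zero =>
      simp [LS, Finset.sum_range_one]
    | succ j =>
      have hLS : LS (n+1) (j+1) = LS n j + ((j:ℝ) + 1) * ((j:ℝ) + 2) * LS n (j+1) := rfl
      rw [hLS, ih j, ih (j+1), show 2*(j+1) = 2*j+2 by ring]
      set G : ℕ → ℝ := fun μ => (-1:ℝ)^μ * ((Nat.choose (2*j+2) μ : ℕ) : ℝ) *
          ((((j:ℝ)+1-μ) * ((j:ℝ)+2-μ)) - ((j:ℝ)+1)*((j:ℝ)+2)) *
          (((j:ℝ)+1-μ) * ((j:ℝ)+2-μ))^n with hG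
      have hsumG : (∑ μ ∈ Finset.range (2*j+2+1), G μ)
          = (2*(j:ℝ)+1)*(2*(j:ℝ)+2) * ∑ ν ∈ Finset.range (2*j+1),
              (-1:ℝ)^ν * (Nat.choose (2*j) ν) * (((j:ℝ)-ν)*((j:ℝ)+1-ν))^n := by
        rw [Finset.sum_range_succ' G (2*j+2)]
        have hG0 : G 0 = 0 := by simp only [hG]; push_cast; ring
        have hterm : ∀ μ ∈ Finset.range (2*j+2), G (μ+1)
            = (2*(j:ℝ)+1)*(2*(j:ℝ)+2) *
                ((-1:ℝ)^μ * (Nat.choose (2*j) μ) * (((j:ℝ)-μ)*((j:ℝ)+1-μ))^n)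
              + (2*(j:ℝ)+2) *
                ((-1:ℝ)^μ * (Nat.choose (2*j+1) μ) * (((j:ℝ)-μ)*((j:ℝ)+1-μ))^n) := by
          intro μ hμ
          have hμ' : μ ≤ 2*j+1 := by
            have := Finset.mem_range.mp hμ; omega
          have hc := coeff_id j μ hμ'
          have hcr : ((μ:ℝ)+1) * ((2*(j:ℝ)+2-(μ:ℝ)) * (Nat.choose (2*j+2) (μ+1) : ℝ))
              = (2*(j:ℝ)+1)*(2*(j:ℝ)+2)*(Nat.choose (2*j) μ : ℝ)
                + (2*(j:ℝ)+2)*(Nat.choose (2*j+1) μ : ℝ) := by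
            have h2 := congrArg (fun t : ℕ => (t:ℝ)) hc
            push_cast [Nat.cast_sub (show μ ≤ 2*j+2 by omega)] at h2
            linear_combination h2
          simp only [hG]
          push_cast
          linear_combination ((-1:ℝ)^μ * (((j:ℝ)-μ)*((j:ℝ)+1-μ))^n) * hcr
        rw [Finset.sum_congr rfl hterm, Finset.sum_add_distrib, ← Finset.mul_sum,
          ← Finset.mul_sum, key_zero n j, hG0]
        have hlast : (∑ μ ∈ Finset.range (2*j+2),
            (-1:ℝ)^μ * (Nat.choose (2*j) μ) * (((j:ℝ)-μ)*((j:ℝ)+1-μ))^n)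
            = ∑ μ ∈ Finset.range (2*j+1),
            (-1:ℝ)^μ * (Nat.choose (2*j) μ) * (((j:ℝ)-μ)*((j:ℝ)+1-μ))^n := by
          rw [show 2*j+2 = (2*j+1)+1 by omega, Finset.sum_range_succ,
            Nat.choose_eq_zero_of_lt (by omega)]
          simp
        rw [hlast]; ring
      have key : (∑ ν ∈ Finset.range (2*j+2+1),
            (-1:ℝ)^ν * (Nat.choose (2*j+2) ν) *
              ((((j+1:ℕ):ℝ) - ν) * (((j+1:ℕ):ℝ) + 1 - ν))^(n+1))
          = (2*(j:ℝ)+1)*(2*(j:ℝ)+2) * (∑ ν ∈ Finset.range (2*j+1),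
              (-1:ℝ)^ν * (Nat.choose (2*j) ν) * (((j:ℝ)-ν)*((j:ℝ)+1-ν))^n)
            + ((j:ℝ)+1)*((j:ℝ)+2) * (∑ ν ∈ Finset.range (2*j+2+1),
              (-1:ℝ)^ν * (Nat.choose (2*j+2) ν) *
                ((((j+1:ℕ):ℝ) - ν) * (((j+1:ℕ):ℝ) + 1 - ν))^n) := by
        have hsplit : ∀ ν ∈ Finset.range (2*j+2+1),
            (-1:ℝ)^ν * (Nat.choose (2*j+2) ν) *
              ((((j+1:ℕ):ℝ) - ν) * (((j+1:ℕ):ℝ) + 1 - ν))^(n+1)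
            = ((j:ℝ)+1)*((j:ℝ)+2) * ((-1:ℝ)^ν * (Nat.choose (2*j+2) ν) *
                ((((j+1:ℕ):ℝ) - ν) * (((j+1:ℕ):ℝ) + 1 - ν))^n) + G ν := by
          intro ν _
          simp only [hG]
          push_cast
          ring
        rw [Finset.sum_congr rfl hsplit, Finset.sum_add_distrib, ← Finset.mul_sum, hsumG]
        ring
      rw [key]
      have hfac : (Nat.factorial (2*j+2) : ℝ)
          = (2*(j:ℝ)+2) * ((2*(j:ℝ)+1) * (Nat.factorial (2*j) : ℝ)) := by
        have e : Nat.factorial (2*j+2) = (2*j+2) * ((2*j+1) * Nat.factorial (2*j)) := by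
          rw [show 2*j+2 = (2*j+1)+1 by omega, Nat.factorial_succ, Nat.factorial_succ]
        rw [e]; push_cast; ring
      rw [hfac]
      have h1 : (Nat.factorial (2*j) : ℝ) ≠ 0 := by
        exact_mod_cast (Nat.factorial_pos (2*j)).ne'
      have h2 : (2*(j:ℝ)+1) ≠ 0 := by positivity
      have h3 : (2*(j:ℝ)+2) ≠ 0 := by positivity
      field_simp
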